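/- Suppose ‖Γ‖_∞ < ∞ and in addition: (i) sup_{q∈Ŝ} sup_{j∈ℕ} ∑_{i=1}^∞ |Γ_ij(q)| ≤ c_Γ for some c_Γ ∈ (0,∞), and (ii) there exists L_Γ ∈ (0,∞) such that sup_{i∈ℕ} ∑_{j≠i} |Γ_ij(q̃) − Γ_ij(q)| ≤ L_Γ ‖q̃ − q‖ for all q, q̃ ∈ Ŝ. Then there exists γ₅ ∈ (0,∞), depending only on ‖Γ‖_∞, c_Γ and L_Γ, such that for every bounded measurable g : X → ℝ and all q, q̃ ∈ Ŝ, the ℓ²(ℕ)-valued Bochner integral ∫_X (G(q̃,y) − G(q,y)) g(y) λ_X(dy) exists and satisfies ‖∫_X (G(q̃,y) − G(q,y)) g(y) λ_X(dy)‖ ≤ γ₅ ‖g‖_∞ ‖q̃ − q‖. -/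

import Mathlib

noncomputable section
open MeasureTheory

/-- The Hilbert space `ℓ²(ℕ)` of square-summable real sequences. -/
abbrev H2 : Type := lp (fun _ : ℕ => ℝ) 2

/-- The simplex `Ŝ` of probability vectors in `ℓ²(ℕ)`. -/
def simplexS : Set H2 := {q | (∀ i, 0 ≤ q i) ∧ HasSum (fun i => q i) 1}

/-- The set `A_ij(q) ⊆ X = [0,∞)²` (here `K` plays the role of `‖Γ‖_∞`). -/
def Aset (K : ℝ) (Γ : H2 → ℕ → ℕ → ℝ) (q : H2) (i j : ℕ) : Set (ℝ × ℝ) :=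
  Set.Ioc (i : ℝ) (i + 1) ×ˢ Set.Ioc ((j : ℝ) * K) ((j : ℝ) * K + q i * Γ q i j)

/-- The map `G : Ŝ × X → ℓ²(ℕ)`, `G(q,y) = ∑_{i ≠ j} (e_j − e_i) 1_{A_ij(q)}(y)`:
since the `A_ij(q)` are pairwise disjoint, `G(q,y) = e_j − e_i` for the (unique)
pair `(i,j)`, `i ≠ j`, with `y ∈ A_ij(q)`, and `G(q,y) = 0` otherwise. -/
def Gmap (K : ℝ) (Γ : H2 → ℕ → ℕ → ℝ) (q : H2) (y : ℝ × ℝ) : H2 :=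
  @dite _ (∃ p : ℕ × ℕ, p.1 ≠ p.2 ∧ y ∈ Aset K Γ q p.1 p.2) (Classical.dec _)
    (fun h => lp.single 2 h.choose.2 1 - lp.single 2 h.choose.1 1) (fun _ => 0)

/-- The rate matrix hypotheses: `Γ_ij(q) ≥ 0` for `i ≠ j`,
`Γ_ii(q) = −∑_{j≠i} Γ_ij(q)` (a convergent sum), and `K` is an upper bound for
`sup_{q∈Ŝ} sup_i |Γ_ii(q)|` (i.e. `‖Γ‖_∞ ≤ K < ∞`). -/
structure RateMatrix (K : ℝ) (Γ : H2 → ℕ → ℕ → ℝ) : Prop where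
  nonneg : ∀ q ∈ simplexS, ∀ i j, i ≠ j → 0 ≤ Γ q i j
  diag : ∀ q ∈ simplexS, ∀ i,
    HasSum (fun j => if j = i then 0 else Γ q i j) (-(Γ q i i))
  bound : ∀ q ∈ simplexS, ∀ i, |Γ q i i| ≤ K


lemma simplex_le_one {q : H2} (hq : q ∈ simplexS) (i : ℕ) : q i ≤ 1 :=
  le_hasSum hq.2 i (fun j _ => hq.1 j)

lemma hasSum_sq (x : H2) : HasSum (fun i => (x i) ^ 2) (‖x‖ ^ 2) := by
  have h := lp.hasSum_inner (𝕜 := ℝ) x x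
  have h2 : (inner ℝ x x : ℝ) = ‖x‖ ^ 2 := real_inner_self_eq_norm_sq x
  rw [h2] at h
  convert h using 2 with i
  exacts [rfl, by simp [sq]]

lemma norm_eq_sqrt_tsum (x : H2) : ‖x‖ = Real.sqrt (∑' i, x i ^ 2) := by
  rw [(hasSum_sq x).tsum_eq, Real.sqrt_sq (norm_nonneg x)]

private lemma memℓp_abs {w : ℕ → ℝ} (hw : Summable (fun i => w i ^ 2)) :
    Memℓp (fun i => |w i|) 2 := by
  apply memℓp_gen
  have h2 : ((2:ENNReal).toReal) = (2:ℝ) := by norm_num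
  rw [h2]
  convert hw using 2 with i
  rw [Real.norm_eq_abs, abs_abs, Real.rpow_two, sq_abs]

-- Cauchy-Schwarz for series
lemma tsum_CS {u v : ℕ → ℝ} (hu : Summable (fun i => u i ^ 2))
    (hv : Summable (fun i => v i ^ 2)) :
    Summable (fun i => |u i * v i|) ∧
    ∑' i, |u i * v i| ≤ Real.sqrt (∑' i, u i ^ 2) * Real.sqrt (∑' i, v i ^ 2) := by
  have hsum : Summable (fun i => |u i * v i|) := by
    apply Summable.of_nonneg_of_le (fun i => abs_nonneg _)
      (fun i => ?_) ((hu.add hv).div_const 2)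
    rw [abs_mul]
    nlinarith [abs_nonneg (u i), abs_nonneg (v i), sq_abs (u i), sq_abs (v i),
      sq_nonneg (|u i| - |v i|)]
  refine ⟨hsum, ?_⟩
  set ua : H2 := ⟨fun i => |u i|, memℓp_abs hu⟩ with hua
  set va : H2 := ⟨fun i => |v i|, memℓp_abs hv⟩ with hva
  have happ_u : ∀ i, ua i = |u i| := fun i => rfl
  have happ_v : ∀ i, va i = |v i| := fun i => rfl
  have hinner : (inner ℝ ua va : ℝ) = ∑' i, |u i * v i| := by
    rw [lp.inner_eq_tsum]
    congr 1 with i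
    simp [happ_u, happ_v, RCLike.inner_apply, abs_mul, mul_comm]
  have hCS := abs_real_inner_le_norm ua va
  rw [hinner] at hCS
  have hnu : ‖ua‖ = Real.sqrt (∑' i, u i ^ 2) := by
    rw [norm_eq_sqrt_tsum]
    congr 1
    exact tsum_congr fun i => by rw [happ_u, sq_abs]
  have hnv : ‖va‖ = Real.sqrt (∑' i, v i ^ 2) := by
    rw [norm_eq_sqrt_tsum]
    congr 1
    exact tsum_congr fun i => by rw [happ_v, sq_abs]
  calc (∑' i, |u i * v i|) ≤ |(∑' i, |u i * v i|)| := le_abs_self _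
    _ ≤ ‖ua‖ * ‖va‖ := hCS
    _ = _ := by rw [hnu, hnv]


lemma simplex_norm_le_one {q : H2} (hq : q ∈ simplexS) : ‖q‖ ≤ 1 := by
  have h1 : ‖q‖ ^ 2 ≤ 1 := by
    rw [← (hasSum_sq q).tsum_eq, ← hq.2.tsum_eq]
    exact Summable.tsum_le_tsum (fun i => by nlinarith [hq.1 i, simplex_le_one hq i])
      (hasSum_sq q).summable hq.2.summable
  nlinarith [norm_nonneg q]

section Γfacts
variable {K : ℝ} {Γ : H2 → ℕ → ℕ → ℝ} (hΓ : RateMatrix K Γ) {q : H2} (hq : q ∈ simplexS)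
include hΓ hq

lemma Γ_diag_nonpos (i : ℕ) : Γ q i i ≤ 0 := by
  have h := (hΓ.diag q hq i).nonneg
    (fun j => by split <;> [rfl; exact hΓ.nonneg q hq i j (by omega)])
  linarith

lemma Γ_offdiag_le {i j : ℕ} (hij : i ≠ j) : Γ q i j ≤ K := by
  have h1 : (if j = i then (0:ℝ) else Γ q i j) ≤ -(Γ q i i) :=
    le_hasSum (hΓ.diag q hq i) j
      (fun k _ => by split <;> [rfl; exact hΓ.nonneg q hq i k (by omega)])
  rw [if_neg (by omega)] at h1
  have h2 := abs_le.mp (hΓ.bound q hq i)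
  linarith [h2.1]

lemma qΓ_nonneg {i j : ℕ} (hij : i ≠ j) : 0 ≤ q i * Γ q i j :=
  mul_nonneg (hq.1 i) (hΓ.nonneg q hq i j hij)

lemma qΓ_le_K {i j : ℕ} (hij : i ≠ j) : q i * Γ q i j ≤ K :=
  calc q i * Γ q i j ≤ 1 * Γ q i j := by
        have := hΓ.nonneg q hq i j hij
        nlinarith [simplex_le_one hq i]
    _ ≤ K := by rw [one_mul]; exact Γ_offdiag_le hΓ hq hij

lemma Aset_diag_empty (i : ℕ) : Aset K Γ q i i = ∅ := by
  have h : q i * Γ q i i ≤ 0 := mul_nonpos_of_nonneg_of_nonpos (hq.1 i) (Γ_diag_nonpos hΓ hq i)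
  apply Set.eq_empty_of_forall_notMem
  rintro ⟨y1, y2⟩ ⟨-, hy2⟩
  simp only [Set.mem_Ioc] at hy2
  linarith [hy2.1, hy2.2]

lemma Aset_ne {i j : ℕ} {y : ℝ × ℝ} (hy : y ∈ Aset K Γ q i j) :
    i ≠ j := by
  intro h; subst h
  rw [Aset_diag_empty hΓ hq] at hy
  exact hy

end Γfacts

lemma Aset_unique {K : ℝ} (hK0 : 0 ≤ K) {Γ : H2 → ℕ → ℕ → ℝ} (hΓ : RateMatrix K Γ)
    {q q' : H2} (hq : q ∈ simplexS) (hq' : q' ∈ simplexS) {i j k l : ℕ} {y : ℝ × ℝ}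
    (h1 : y ∈ Aset K Γ q i j) (h2 : y ∈ Aset K Γ q' k l) : i = k ∧ j = l := by
  have hij : i ≠ j := Aset_ne hΓ hq h1
  have hkl : k ≠ l := Aset_ne hΓ hq' h2
  obtain ⟨ha1, hb1⟩ := h1
  obtain ⟨ha2, hb2⟩ := h2
  simp only [Set.mem_Ioc] at ha1 hb1 ha2 hb2
  have hik : i = k := by
    by_contra h
    rcases Nat.lt_or_ge i k with hlt | hge
    · have : (i:ℝ) + 1 ≤ k := by exact_mod_cast Nat.succ_le_of_lt hlt
      linarith [ha1.2, ha2.1]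
    · have hlt' : k < i := by omega
      have : (k:ℝ) + 1 ≤ i := by exact_mod_cast Nat.succ_le_of_lt hlt'
      linarith [ha2.2, ha1.1]
  refine ⟨hik, ?_⟩
  have hcK : q i * Γ q i j ≤ K := qΓ_le_K hΓ hq hij
  have hcK' : q' k * Γ q' k l ≤ K := qΓ_le_K hΓ hq' hkl
  by_contra h
  rcases Nat.lt_or_ge j l with hlt | hge
  · have : ((j:ℝ) + 1) * K ≤ l * K := by
      apply mul_le_mul_of_nonneg_right _ hK0
      exact_mod_cast Nat.succ_le_of_lt hlt
    nlinarith [hb1.2, hb2.1]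
  · have hlt' : l < j := by omega
    have : ((l:ℝ) + 1) * K ≤ j * K := by
      apply mul_le_mul_of_nonneg_right _ hK0
      exact_mod_cast Nat.succ_le_of_lt hlt'
    nlinarith [hb2.2, hb1.1]

lemma Gmap_eq_of_mem {K : ℝ} (hK0 : 0 ≤ K) {Γ : H2 → ℕ → ℕ → ℝ} (hΓ : RateMatrix K Γ)
    {q : H2} (hq : q ∈ simplexS) {i j : ℕ} {y : ℝ × ℝ} (hy : y ∈ Aset K Γ q i j) :
    Gmap K Γ q y = lp.single 2 j 1 - lp.single 2 i 1 := by
  have hij : i ≠ j := Aset_ne hΓ hq hy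
  have hP : ∃ p : ℕ × ℕ, p.1 ≠ p.2 ∧ y ∈ Aset K Γ q p.1 p.2 := ⟨(i, j), hij, hy⟩
  rw [Gmap, dif_pos hP]
  obtain ⟨-, hmem⟩ := hP.choose_spec
  obtain ⟨h1, h2⟩ := Aset_unique hK0 hΓ hq hq hmem hy
  rw [h1, h2]

lemma Gmap_eq_zero {K : ℝ} {Γ : H2 → ℕ → ℕ → ℝ} {q : H2} {y : ℝ × ℝ}
    (h : ¬∃ p : ℕ × ℕ, p.1 ≠ p.2 ∧ y ∈ Aset K Γ q p.1 p.2) : Gmap K Γ q y = 0 := by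
  rw [Gmap, dif_neg h]

lemma measurableSet_Aset (K : ℝ) (Γ : H2 → ℕ → ℕ → ℝ) (q : H2) (i j : ℕ) :
    MeasurableSet (Aset K Γ q i j) :=
  measurableSet_Ioc.prod measurableSet_Ioc

def pairEquiv : ℕ ≃ ℕ × ℕ := (Denumerable.eqv (ℕ × ℕ)).symm

lemma stronglyMeasurable_Gmap {K : ℝ} {Γ : H2 → ℕ → ℕ → ℝ} (hΓ : RateMatrix K Γ)
    {q : H2} (hq : q ∈ simplexS) : StronglyMeasurable (Gmap K Γ q) := by
  classical
  set F : ℕ → (ℝ × ℝ) → H2 := fun n y => ∑ m ∈ Finset.range n,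
    Set.indicator (Aset K Γ q (pairEquiv m).1 (pairEquiv m).2)
      (fun _ => (lp.single 2 (pairEquiv m).2 1 - lp.single 2 (pairEquiv m).1 1 : H2)) y
    with hF
  have hFmeas : ∀ n, StronglyMeasurable (F n) := by
    intro n
    apply Finset.stronglyMeasurable_fun_sum
    intro m _
    exact (stronglyMeasurable_const).indicator (measurableSet_Aset K Γ q _ _)
  apply stronglyMeasurable_of_tendsto Filter.atTop hFmeas
  rw [tendsto_pi_nhds]
  intro y
  by_cases hP : ∃ p : ℕ × ℕ, p.1 ≠ p.2 ∧ y ∈ Aset K Γ q p.1 p.2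
  · obtain ⟨⟨i, j⟩, hij, hy⟩ := hP
    have hG : Gmap K Γ q y = lp.single 2 j 1 - lp.single 2 i 1 := by
      -- we don't have hK0 here; derive 0 ≤ K from hΓ.bound
      exact Gmap_eq_of_mem (le_trans (abs_nonneg _) (hΓ.bound q hq 0)) hΓ hq hy
    rw [hG]
    apply tendsto_atTop_of_eventually_const (i₀ := pairEquiv.symm (i, j) + 1)
    intro n hn
    simp only [hF]
    rw [Finset.sum_eq_single_of_mem (pairEquiv.symm (i, j))
      (Finset.mem_range.mpr (by omega))]
    · rw [Set.indicator_of_mem]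
      · simp
      · simpa using hy
    · intro m hm hne
      apply Set.indicator_of_notMem
      intro hy'
      have hK0 : (0:ℝ) ≤ K := le_trans (abs_nonneg _) (hΓ.bound q hq 0)
      obtain ⟨h1, h2⟩ := Aset_unique hK0 hΓ hq hq hy' hy
      apply hne
      have : pairEquiv m = (i, j) := by
        rw [Prod.ext_iff]; exact ⟨h1, h2⟩
      rw [← this, Equiv.symm_apply_apply]
  · have hG : Gmap K Γ q y = 0 := Gmap_eq_zero hP
    rw [hG]
    apply tendsto_atTop_of_eventually_const (i₀ := 0)
    intro n _
    simp only [hF]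
    apply Finset.sum_eq_zero
    intro m _
    apply Set.indicator_of_notMem
    intro hy'
    exact hP ⟨pairEquiv m, Aset_ne hΓ hq hy', hy'⟩
lemma vol_Aset (K : ℝ) (Γ : H2 → ℕ → ℕ → ℝ) (q : H2) (i j : ℕ) :
    volume (Aset K Γ q i j) = ENNReal.ofReal (q i * Γ q i j) := by
  rw [Aset, Measure.volume_eq_prod, Measure.prod_prod, Real.volume_Ioc, Real.volume_Ioc]
  simp

def USet (K : ℝ) (Γ : H2 → ℕ → ℕ → ℝ) (q : H2) : Set (ℝ × ℝ) :=
  ⋃ p : ℕ × ℕ, Aset K Γ q p.1 p.2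

lemma measurableSet_USet (K : ℝ) (Γ : H2 → ℕ → ℕ → ℝ) (q : H2) :
    MeasurableSet (USet K Γ q) :=
  MeasurableSet.iUnion fun p => measurableSet_Aset K Γ q p.1 p.2

lemma vol_USet_le {K : ℝ} {Γ : H2 → ℕ → ℕ → ℝ} (hΓ : RateMatrix K Γ)
    {q : H2} (hq : q ∈ simplexS) : volume (USet K Γ q) ≤ ENNReal.ofReal K := by
  refine le_trans (measure_iUnion_le _) ?_
  calc ∑' p : ℕ × ℕ, volume (Aset K Γ q p.1 p.2)
      = ∑' (i : ℕ) (j : ℕ), volume (Aset K Γ q i j) := ENNReal.tsum_prod'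
    _ ≤ ∑' (i : ℕ), ENNReal.ofReal (q i * K) := by
        apply ENNReal.tsum_le_tsum
        intro i
        have hsum : HasSum (fun j => if j = i then 0 else q i * Γ q i j)
            (q i * (-(Γ q i i))) := by
          have h := (hΓ.diag q hq i).mul_left (q i)
          simpa only [mul_ite, mul_zero] using h
        have hrw : ∀ j : ℕ, volume (Aset K Γ q i j)
            = ENNReal.ofReal (if j = i then 0 else q i * Γ q i j) := by
          intro j
          rw [vol_Aset]
          split
          · rename_i h; subst h
            rw [ENNReal.ofReal_eq_zero.mpr, ENNReal.ofReal_zero]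
            exact mul_nonpos_of_nonneg_of_nonpos (hq.1 j) (Γ_diag_nonpos hΓ hq j)
          · rfl
        calc ∑' j, volume (Aset K Γ q i j)
            = ∑' j, ENNReal.ofReal (if j = i then 0 else q i * Γ q i j) :=
              tsum_congr hrw
          _ = ENNReal.ofReal (∑' j, if j = i then 0 else q i * Γ q i j) :=
              (ENNReal.ofReal_tsum_of_nonneg (fun j => by
                split <;> [rfl; exact qΓ_nonneg hΓ hq (by omega)]) hsum.summable).symm
          _ = ENNReal.ofReal (q i * (-(Γ q i i))) := by rw [hsum.tsum_eq]
          _ ≤ ENNReal.ofReal (q i * K) := by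
              apply ENNReal.ofReal_le_ofReal
              have h2 := abs_le.mp (hΓ.bound q hq i)
              nlinarith [hq.1 i, h2.1]
    _ = ENNReal.ofReal (∑' i, q i * K) := by
        rw [ENNReal.ofReal_tsum_of_nonneg
          (fun i => mul_nonneg (hq.1 i) (le_trans (abs_nonneg _) (hΓ.bound q hq 0)))
          (hq.2.mul_right K).summable]
    _ = ENNReal.ofReal K := by rw [(hq.2.mul_right K).tsum_eq, one_mul]

lemma norm_lp_single_one (i : ℕ) : ‖(lp.single 2 i (1:ℝ) : H2)‖ = 1 := by
  have h := lp.norm_single (E := fun _ : ℕ => ℝ) (p := 2) (by norm_num)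
    i (1:ℝ)
  simpa using h

lemma norm_Gmap_le (K : ℝ) (Γ : H2 → ℕ → ℕ → ℝ) (q : H2) (y : ℝ × ℝ) :
    ‖Gmap K Γ q y‖ ≤ 2 := by
  rw [Gmap]
  split
  · refine le_trans (norm_sub_le _ _) ?_
    rw [norm_lp_single_one, norm_lp_single_one]
    norm_num
  · simp

lemma Gmap_zero_of_not_mem {K : ℝ} {Γ : H2 → ℕ → ℕ → ℝ} {q : H2} {y : ℝ × ℝ}
    (h : y ∉ USet K Γ q) : Gmap K Γ q y = 0 := by
  apply Gmap_eq_zero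
  rintro ⟨p, -, hp⟩
  exact h (Set.mem_iUnion.mpr ⟨p, hp⟩)
lemma integrable_main {K : ℝ} {Γ : H2 → ℕ → ℕ → ℝ} (hΓ : RateMatrix K Γ)
    {q q' : H2} (hq : q ∈ simplexS) (hq' : q' ∈ simplexS)
    {g : ℝ × ℝ → ℝ} (hg : Measurable g) {C : ℝ} (hC : ∀ y, |g y| ≤ C) :
    Integrable (fun y : ℝ × ℝ => g y • (Gmap K Γ q' y - Gmap K Γ q y)) volume := by
  have hC0 : 0 ≤ C := le_trans (abs_nonneg _) (hC (0, 0))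
  have hsm : AEStronglyMeasurable
      (fun y : ℝ × ℝ => g y • (Gmap K Γ q' y - Gmap K Γ q y)) volume :=
    (hg.stronglyMeasurable.smul
      ((stronglyMeasurable_Gmap hΓ hq').sub (stronglyMeasurable_Gmap hΓ hq))).aestronglyMeasurable
  set U : Set (ℝ × ℝ) := USet K Γ q' ∪ USet K Γ q with hU
  have hUmeas : MeasurableSet U :=
    (measurableSet_USet K Γ q').union (measurableSet_USet K Γ q)
  have hUvol : volume U < ⊤ := by
    refine lt_of_le_of_lt (measure_union_le _ _) ?_
    exact lt_of_le_of_lt (add_le_add (vol_USet_le hΓ hq') (vol_USet_le hΓ hq))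
      (by simp [ENNReal.add_lt_top])
  refine Integrable.mono' (g := fun y => Set.indicator U (fun _ => 4 * C) y)
    ?_ hsm ?_
  · rw [integrable_indicator_iff hUmeas]
    exact integrableOn_const hUvol.ne
  · filter_upwards with y
    by_cases hy : y ∈ U
    · rw [Set.indicator_of_mem hy]
      rw [norm_smul]
      calc ‖g y‖ * ‖Gmap K Γ q' y - Gmap K Γ q y‖
          ≤ C * 4 := by
            apply mul_le_mul (hC y) ?_ (norm_nonneg _) hC0
            refine le_trans (norm_sub_le _ _) ?_
            linarith [norm_Gmap_le K Γ q' y, norm_Gmap_le K Γ q y]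
        _ = 4 * C := by ring
    · have h1 : Gmap K Γ q' y = 0 :=
        Gmap_zero_of_not_mem (fun h => hy (Set.mem_union_left _ h))
      have h2 : Gmap K Γ q y = 0 :=
        Gmap_zero_of_not_mem (fun h => hy (Set.mem_union_right _ h))
      rw [Set.indicator_of_notMem hy, h1, h2]
      simp
def Dset (K : ℝ) (Γ : H2 → ℕ → ℕ → ℝ) (q q' : H2) (p : ℕ × ℕ) : Set (ℝ × ℝ) :=
  (Aset K Γ q' p.1 p.2 \ Aset K Γ q p.1 p.2) ∪ (Aset K Γ q p.1 p.2 \ Aset K Γ q' p.1 p.2)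

lemma measurableSet_Dset (K : ℝ) (Γ : H2 → ℕ → ℕ → ℝ) (q q' : H2) (p : ℕ × ℕ) :
    MeasurableSet (Dset K Γ q q' p) :=
  ((measurableSet_Aset K Γ q' p.1 p.2).diff (measurableSet_Aset K Γ q p.1 p.2)).union
    ((measurableSet_Aset K Γ q p.1 p.2).diff (measurableSet_Aset K Γ q' p.1 p.2))

lemma vol_diff_le {K : ℝ} {Γ : H2 → ℕ → ℕ → ℝ} (q q' : H2) (i j : ℕ) :
    volume (Aset K Γ q' i j \ Aset K Γ q i j)
      ≤ ENNReal.ofReal (q' i * Γ q' i j - q i * Γ q i j) := by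
  have hsub : Aset K Γ q' i j \ Aset K Γ q i j
      ⊆ Set.Ioc (i : ℝ) (i + 1) ×ˢ
        Set.Ioc ((j : ℝ) * K + q i * Γ q i j) ((j : ℝ) * K + q' i * Γ q' i j) := by
    rintro ⟨y1, y2⟩ ⟨⟨hy1, hy2⟩, hynot⟩
    simp only [Set.mem_Ioc, Set.mem_prod] at *
    refine ⟨hy1, ?_, hy2.2⟩
    by_contra h
    push_neg at h
    exact hynot ⟨hy1, hy2.1, h⟩
  refine le_trans (measure_mono hsub) ?_
  rw [Measure.volume_eq_prod, Measure.prod_prod, Real.volume_Ioc, Real.volume_Ioc]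
  have h1 : ((i:ℝ) + 1 - i) = 1 := by ring
  have h2 : (j : ℝ) * K + q' i * Γ q' i j - ((j : ℝ) * K + q i * Γ q i j)
      = q' i * Γ q' i j - q i * Γ q i j := by ring
  rw [h1, h2]
  simp

lemma vol_Dset_le {K : ℝ} {Γ : H2 → ℕ → ℕ → ℝ} (hΓ : RateMatrix K Γ)
    {q q' : H2} (hq : q ∈ simplexS) (hq' : q' ∈ simplexS) {i j : ℕ} (hij : i ≠ j) :
    volume (Dset K Γ q q' (i, j))
      ≤ ENNReal.ofReal (q' i * |Γ q' i j - Γ q i j| + |q' i - q i| * Γ q i j) := by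
  have habs : |q' i * Γ q' i j - q i * Γ q i j|
      ≤ q' i * |Γ q' i j - Γ q i j| + |q' i - q i| * Γ q i j := by
    have hrw : q' i * Γ q' i j - q i * Γ q i j
        = q' i * (Γ q' i j - Γ q i j) + (q' i - q i) * Γ q i j := by ring
    calc |q' i * Γ q' i j - q i * Γ q i j|
        ≤ |q' i * (Γ q' i j - Γ q i j)| + |(q' i - q i) * Γ q i j| := by
          rw [hrw]; exact abs_add_le _ _
      _ = _ := by
          rw [abs_mul, abs_mul, abs_of_nonneg (hq'.1 i),
            abs_of_nonneg (hΓ.nonneg q hq i j hij)]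
  have h1 := vol_diff_le (K := K) (Γ := Γ) q q' i j
  have h2 := vol_diff_le (K := K) (Γ := Γ) q' q i j
  refine le_trans (measure_union_le _ _) ?_
  rcases le_total (q i * Γ q i j) (q' i * Γ q' i j) with hcc | hcc
  · have hz : volume (Aset K Γ q i j \ Aset K Γ q' i j) = 0 := by
      refine le_antisymm (le_trans h2 ?_) zero_le
      simp only [nonpos_iff_eq_zero, ENNReal.ofReal_eq_zero]
      linarith
    rw [hz, add_zero]
    refine le_trans h1 (ENNReal.ofReal_le_ofReal ?_)
    calc q' i * Γ q' i j - q i * Γ q i j ≤ |q' i * Γ q' i j - q i * Γ q i j| :=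
        le_abs_self _
      _ ≤ _ := habs
  · have hz : volume (Aset K Γ q' i j \ Aset K Γ q i j) = 0 := by
      refine le_antisymm (le_trans h1 ?_) zero_le
      simp only [nonpos_iff_eq_zero, ENNReal.ofReal_eq_zero]
      linarith
    rw [hz, zero_add]
    refine le_trans h2 (ENNReal.ofReal_le_ofReal ?_)
    have hneg : q i * Γ q i j - q' i * Γ q' i j
        = -(q' i * Γ q' i j - q i * Γ q i j) := by ring
    rw [hneg]
    exact le_trans (neg_le_abs _) habs
def mrFn (K : ℝ) (Γ : H2 → ℕ → ℕ → ℝ) (q q' : H2) (p : ℕ × ℕ) : ℝ :=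
  if p.1 = p.2 then 0
  else q' p.1 * |Γ q' p.1 p.2 - Γ q p.1 p.2| + |q' p.1 - q p.1| * Γ q p.1 p.2

lemma scalar_est {K : ℝ} (hK0 : 0 ≤ K) {Γ : H2 → ℕ → ℕ → ℝ} (hΓ : RateMatrix K Γ)
    {cΓ LΓ : ℝ} (hcΓ0 : 0 < cΓ) (hLΓ0 : 0 < LΓ)
    (hcΓ : ∀ q ∈ simplexS, ∀ j, Summable (fun i => |Γ q i j|) ∧
      (∑' i, |Γ q i j|) ≤ cΓ)
    (hLΓ : ∀ q ∈ simplexS, ∀ q' ∈ simplexS, ∀ i,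
      Summable (fun j => if j = i then 0 else |Γ q' i j - Γ q i j|) ∧
      (∑' j, if j = i then 0 else |Γ q' i j - Γ q i j|) ≤ LΓ * ‖q' - q‖)
    {q q' : H2} (hq : q ∈ simplexS) (hq' : q' ∈ simplexS) (x : H2) :
    Summable (fun p : ℕ × ℕ => (|x p.1| + |x p.2|) * mrFn K Γ q q' p) ∧
    ∑' p : ℕ × ℕ, (|x p.1| + |x p.2|) * mrFn K Γ q q' p
      ≤ (2 * LΓ + K + Real.sqrt cΓ * Real.sqrt K) * ‖x‖ * ‖q' - q‖ := by
  classical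
  set N : ℝ := ‖x‖ with hN
  set Δ : ℝ := ‖q' - q‖ with hΔ
  have hN0 : 0 ≤ N := norm_nonneg _
  have hΔ0 : 0 ≤ Δ := norm_nonneg _
  set d : ℕ → ℕ → ℝ := fun i j => if j = i then 0 else |Γ q' i j - Γ q i j| with hd
  set G0 : ℕ → ℕ → ℝ := fun i j => if j = i then 0 else Γ q i j with hG0
  set δ : ℕ → ℝ := fun i => q' i - q i with hδ
  -- basic facts
  have hd0 : ∀ i j, 0 ≤ d i j := fun i j => by
    simp only [hd]; split <;> [rfl; exact abs_nonneg _]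
  have hG00 : ∀ i j, 0 ≤ G0 i j := fun i j => by
    simp only [hG0]; split <;> [rfl; exact hΓ.nonneg q hq i j (by omega)]
  have hG0K : ∀ i j, G0 i j ≤ K := fun i j => by
    simp only [hG0]; split <;> [exact hK0; exact Γ_offdiag_le hΓ hq (by omega)]
  have hdsum : ∀ i, Summable (d i) := fun i => (hLΓ q hq q' hq' i).1
  have hdle : ∀ i, ∑' j, d i j ≤ LΓ * Δ := fun i => (hLΓ q hq q' hq' i).2
  have hG0sum : ∀ i, HasSum (G0 i) (-(Γ q i i)) := fun i => hΓ.diag q hq i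
  have hG0tle : ∀ i, ∑' j, G0 i j ≤ K := fun i => by
    rw [(hG0sum i).tsum_eq]
    have h2 := abs_le.mp (hΓ.bound q hq i)
    linarith [h2.1]
  have hG0col : ∀ j, Summable (fun i => G0 i j) := fun j => by
    apply Summable.of_nonneg_of_le (fun i => hG00 i j) (fun i => ?_) (hcΓ q hq j).1
    simp only [hG0]; split <;> [exact abs_nonneg _; exact le_abs_self _]
  have hG0colle : ∀ j, ∑' i, G0 i j ≤ cΓ := fun j => by
    refine le_trans (Summable.tsum_le_tsum (fun i => ?_) (hG0col j) (hcΓ q hq j).1) (hcΓ q hq j).2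
    simp only [hG0]; split <;> [exact abs_nonneg _; exact le_abs_self _]
  have hxsq : Summable (fun i => x i ^ 2) := (hasSum_sq x).summable
  have hxsqt : ∑' i, x i ^ 2 = N ^ 2 := (hasSum_sq x).tsum_eq
  have hq'sq : Summable (fun i => q' i ^ 2) := (hasSum_sq q').summable
  have hδco : ∀ i, (q' - q) i = δ i := fun i => by
    rw [hδ]; exact lp.coeFn_sub q' q ▸ rfl
  have hδsq : Summable (fun i => δ i ^ 2) := by
    have h := (hasSum_sq (q' - q)).summable
    exact h.congr fun i => by rw [hδco i]
  have hδsqt : ∑' i, δ i ^ 2 = Δ ^ 2 := by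
    rw [← (hasSum_sq (q' - q)).tsum_eq]
    exact tsum_congr fun i => by rw [hδco i]
  have hxcoord : ∀ i, |x i| ≤ N := fun i => by
    simpa using lp.norm_apply_le_norm (by norm_num : (2:ENNReal) ≠ 0) x i
  have hδcoord : ∀ i, |δ i| ≤ Δ := fun i => by
    have := lp.norm_apply_le_norm (by norm_num : (2:ENNReal) ≠ 0) (q' - q) i
    rw [hδco i] at this
    simpa using this
  -- ∑ |x i| * q' i  ≤ N  and summable
  have hxq' : Summable (fun i => |x i| * q' i) ∧ ∑' i, |x i| * q' i ≤ N := by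
    obtain ⟨hs, hb⟩ := tsum_CS hxsq hq'sq
    have hcongr : ∀ i, |x i * q' i| = |x i| * q' i := fun i => by
      rw [abs_mul, abs_of_nonneg (hq'.1 i)]
    constructor
    · exact hs.congr hcongr
    · rw [← tsum_congr hcongr]
      refine le_trans hb ?_
      rw [hxsqt, Real.sqrt_sq hN0]
      have h1 : Real.sqrt (∑' i, q' i ^ 2) = ‖q'‖ := (norm_eq_sqrt_tsum q').symm
      rw [h1]
      nlinarith [simplex_norm_le_one hq', norm_nonneg q']
  -- ∑ |x i| * |δ i| ≤ N * Δ and summable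
  have hxδ : Summable (fun i => |x i| * |δ i|) ∧ ∑' i, |x i| * |δ i| ≤ N * Δ := by
    obtain ⟨hs, hb⟩ := tsum_CS hxsq hδsq
    have hcongr : ∀ i, |x i * δ i| = |x i| * |δ i| := fun i => abs_mul _ _
    constructor
    · exact hs.congr hcongr
    · rw [← tsum_congr hcongr]
      refine le_trans hb ?_
      rw [hxsqt, hδsqt, Real.sqrt_sq hN0, Real.sqrt_sq hΔ0]
  -- the four pieces
  set F1 : ℕ × ℕ → ℝ := fun p => |x p.1| * (q' p.1 * d p.1 p.2) with hF1
  set F2 : ℕ × ℕ → ℝ := fun p => |x p.2| * (q' p.1 * d p.1 p.2) with hF2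
  set F3 : ℕ × ℕ → ℝ := fun p => |x p.1| * (|δ p.1| * G0 p.1 p.2) with hF3
  set F4 : ℕ × ℕ → ℝ := fun p => |x p.2| * (|δ p.1| * G0 p.1 p.2) with hF4
  have hF10 : 0 ≤ F1 := fun p => by
    simp only [hF1]
    exact mul_nonneg (abs_nonneg _) (mul_nonneg (hq'.1 _) (hd0 _ _))
  have hF20 : 0 ≤ F2 := fun p => by
    simp only [hF2]
    exact mul_nonneg (abs_nonneg _) (mul_nonneg (hq'.1 _) (hd0 _ _))
  have hF30 : 0 ≤ F3 := fun p => by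
    simp only [hF3]
    exact mul_nonneg (abs_nonneg _) (mul_nonneg (abs_nonneg _) (hG00 _ _))
  have hF40 : 0 ≤ F4 := fun p => by
    simp only [hF4]
    exact mul_nonneg (abs_nonneg _) (mul_nonneg (abs_nonneg _) (hG00 _ _))
  -- F1
  have hF1row : ∀ i, Summable (fun j => F1 (i, j)) := fun i => by
    simpa [hF1, mul_assoc] using ((hdsum i).mul_left (|x i| * q' i))
  have hF1rowsum : ∀ i, ∑' j, F1 (i, j) = (|x i| * q' i) * ∑' j, d i j := fun i => by
    rw [← tsum_mul_left]
    exact tsum_congr fun j => by simp [hF1, mul_assoc]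
  have hF1rows : Summable (fun i => ∑' j, F1 (i, j)) := by
    apply Summable.of_nonneg_of_le
      (fun i => tsum_nonneg (fun j => hF10 (i, j)))
      (fun i => ?_) (hxq'.1.mul_right (LΓ * Δ))
    rw [hF1rowsum i]
    exact mul_le_mul_of_nonneg_left (hdle i) (mul_nonneg (abs_nonneg _) (hq'.1 i))
  have hF1sum : Summable F1 := (summable_prod_of_nonneg hF10).mpr ⟨hF1row, hF1rows⟩
  have hF1bound : ∑' p, F1 p ≤ LΓ * Δ * N := by
    rw [Summable.tsum_prod' hF1sum hF1row]
    calc ∑' i, ∑' j, F1 (i, j) ≤ ∑' i, (|x i| * q' i) * (LΓ * Δ) := by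
          apply Summable.tsum_le_tsum _ hF1rows (hxq'.1.mul_right (LΓ * Δ))
          intro i
          rw [hF1rowsum i]
          exact mul_le_mul_of_nonneg_left (hdle i)
            (mul_nonneg (abs_nonneg _) (hq'.1 i))
      _ = (∑' i, |x i| * q' i) * (LΓ * Δ) := tsum_mul_right
      _ ≤ N * (LΓ * Δ) := by
          exact mul_le_mul_of_nonneg_right hxq'.2 (mul_nonneg hLΓ0.le hΔ0)
      _ = LΓ * Δ * N := by ring
  -- F2
  have hF2majsum : ∀ i, Summable (fun j => N * (q' i * d i j)) := fun i =>
    ((hdsum i).mul_left (q' i)).mul_left N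
  have hF2row : ∀ i, Summable (fun j => F2 (i, j)) := fun i => by
    apply Summable.of_nonneg_of_le (fun j => hF20 (i, j)) (fun j => ?_) (hF2majsum i)
    simp only [hF2]
    exact mul_le_mul_of_nonneg_right (hxcoord j) (mul_nonneg (hq'.1 i) (hd0 i j))
  have hF2rowle : ∀ i, ∑' j, F2 (i, j) ≤ q' i * (N * (LΓ * Δ)) := fun i => by
    calc ∑' j, F2 (i, j) ≤ ∑' j, N * (q' i * d i j) := by
          apply Summable.tsum_le_tsum _ (hF2row i) (hF2majsum i)
          intro j
          simp only [hF2]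
          exact mul_le_mul_of_nonneg_right (hxcoord j) (mul_nonneg (hq'.1 i) (hd0 i j))
      _ = (N * q' i) * ∑' j, d i j := by
          rw [← tsum_mul_left]
          exact tsum_congr fun j => by ring
      _ ≤ (N * q' i) * (LΓ * Δ) :=
          mul_le_mul_of_nonneg_left (hdle i) (mul_nonneg hN0 (hq'.1 i))
      _ = q' i * (N * (LΓ * Δ)) := by ring
  have hF2rows : Summable (fun i => ∑' j, F2 (i, j)) := by
    apply Summable.of_nonneg_of_le
      (fun i => tsum_nonneg (fun j => hF20 (i, j))) hF2rowle
      (hq'.2.summable.mul_right (N * (LΓ * Δ)))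
  have hF2sum : Summable F2 := (summable_prod_of_nonneg hF20).mpr ⟨hF2row, hF2rows⟩
  have hF2bound : ∑' p, F2 p ≤ LΓ * Δ * N := by
    rw [Summable.tsum_prod' hF2sum hF2row]
    calc ∑' i, ∑' j, F2 (i, j) ≤ ∑' i, q' i * (N * (LΓ * Δ)) :=
          Summable.tsum_le_tsum hF2rowle hF2rows (hq'.2.summable.mul_right (N * (LΓ * Δ)))
      _ = (∑' i, q' i) * (N * (LΓ * Δ)) := tsum_mul_right
      _ = LΓ * Δ * N := by rw [hq'.2.tsum_eq]; ring
  -- F3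
  have hF3row : ∀ i, Summable (fun j => F3 (i, j)) := fun i => by
    simpa [hF3, mul_assoc] using ((hG0sum i).summable.mul_left (|x i| * |δ i|))
  have hF3rowsum : ∀ i, ∑' j, F3 (i, j) = (|x i| * |δ i|) * ∑' j, G0 i j := fun i => by
    rw [← tsum_mul_left]
    exact tsum_congr fun j => by simp [hF3, mul_assoc]
  have hF3rowle : ∀ i, ∑' j, F3 (i, j) ≤ (|x i| * |δ i|) * K := fun i => by
    rw [hF3rowsum i]
    exact mul_le_mul_of_nonneg_left (hG0tle i) (mul_nonneg (abs_nonneg _) (abs_nonneg _))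
  have hF3rows : Summable (fun i => ∑' j, F3 (i, j)) :=
    Summable.of_nonneg_of_le (fun i => tsum_nonneg (fun j => hF30 (i, j))) hF3rowle
      (hxδ.1.mul_right K)
  have hF3sum : Summable F3 := (summable_prod_of_nonneg hF30).mpr ⟨hF3row, hF3rows⟩
  have hF3bound : ∑' p, F3 p ≤ K * N * Δ := by
    rw [Summable.tsum_prod' hF3sum hF3row]
    calc ∑' i, ∑' j, F3 (i, j) ≤ ∑' i, (|x i| * |δ i|) * K :=
          Summable.tsum_le_tsum hF3rowle hF3rows (hxδ.1.mul_right K)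
      _ = (∑' i, |x i| * |δ i|) * K := tsum_mul_right
      _ ≤ (N * Δ) * K := mul_le_mul_of_nonneg_right hxδ.2 hK0
      _ = K * N * Δ := by ring
  -- F4
  set s : ℕ → ℝ := fun j => ∑' i, δ i ^ 2 * G0 i j with hs
  have hs0 : ∀ j, 0 ≤ s j := fun j =>
    tsum_nonneg fun i => mul_nonneg (sq_nonneg _) (hG00 i j)
  have hφ0 : (0:ℕ × ℕ → ℝ) ≤ fun p => δ p.1 ^ 2 * G0 p.1 p.2 := fun p =>
    mul_nonneg (sq_nonneg _) (hG00 _ _)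
  have hφrow : ∀ i, Summable (fun j => δ i ^ 2 * G0 i j) := fun i =>
    (hG0sum i).summable.mul_left _
  have hφrowle : ∀ i, ∑' j, δ i ^ 2 * G0 i j ≤ δ i ^ 2 * K := fun i => by
    rw [tsum_mul_left]
    exact mul_le_mul_of_nonneg_left (hG0tle i) (sq_nonneg _)
  have hφrows : Summable (fun i => ∑' j, δ i ^ 2 * G0 i j) :=
    Summable.of_nonneg_of_le
      (fun i => tsum_nonneg fun j => mul_nonneg (sq_nonneg _) (hG00 i j))
      hφrowle (hδsq.mul_right K)
  have hφsum : Summable (fun p : ℕ × ℕ => δ p.1 ^ 2 * G0 p.1 p.2) :=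
    (summable_prod_of_nonneg hφ0).mpr ⟨hφrow, hφrows⟩
  have hscol : ∀ j, Summable (fun i => δ i ^ 2 * G0 i j) := fun j => by
    apply Summable.of_nonneg_of_le (fun i => mul_nonneg (sq_nonneg _) (hG00 i j))
      (fun i => ?_) ((hG0col j).mul_left (Δ ^ 2))
    apply mul_le_mul_of_nonneg_right _ (hG00 i j)
    have := hδcoord i
    nlinarith [sq_abs (δ i), abs_nonneg (δ i)]
  have hssum : Summable s := by
    have hsw : Summable (fun r : ℕ × ℕ => δ r.2 ^ 2 * G0 r.2 r.1) := hφsum.prod_symm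
    have h := (summable_prod_of_nonneg
      (fun r : ℕ × ℕ => mul_nonneg (sq_nonneg (δ r.2)) (hG00 r.2 r.1))).mp hsw
    exact h.2
  have hstot : ∑' j, s j ≤ K * Δ ^ 2 := by
    have hcomm : ∑' (j) (i), δ i ^ 2 * G0 i j = ∑' (i) (j), δ i ^ 2 * G0 i j :=
      Summable.tsum_comm' hφsum hφrow hscol
    calc ∑' j, s j = ∑' (i) (j), δ i ^ 2 * G0 i j := hcomm
      _ ≤ ∑' i, δ i ^ 2 * K := Summable.tsum_le_tsum hφrowle hφrows (hδsq.mul_right K)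
      _ = (∑' i, δ i ^ 2) * K := tsum_mul_right
      _ = K * Δ ^ 2 := by rw [hδsqt]; ring
  have hwcol : ∀ j, Summable (fun i => |δ i| * G0 i j) := fun j => by
    apply Summable.of_nonneg_of_le (fun i => mul_nonneg (abs_nonneg _) (hG00 i j))
      (fun i => mul_le_mul_of_nonneg_right (hδcoord i) (hG00 i j))
      ((hG0col j).mul_left Δ)
  have hwle : ∀ j, ∑' i, |δ i| * G0 i j ≤ Real.sqrt cΓ * Real.sqrt (s j) := fun j => by
    have hu : Summable (fun i => Real.sqrt (G0 i j) ^ 2) :=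
      (hG0col j).congr (fun i => (Real.sq_sqrt (hG00 i j)).symm)
    have hv : Summable (fun i => (δ i * Real.sqrt (G0 i j)) ^ 2) := by
      apply (hscol j).congr
      intro i
      rw [mul_pow, Real.sq_sqrt (hG00 i j)]
    obtain ⟨-, hb⟩ := tsum_CS hu hv
    have hcongr : ∀ i, |Real.sqrt (G0 i j) * (δ i * Real.sqrt (G0 i j))|
        = |δ i| * G0 i j := fun i => by
      rw [show Real.sqrt (G0 i j) * (δ i * Real.sqrt (G0 i j))
          = δ i * (Real.sqrt (G0 i j) * Real.sqrt (G0 i j)) by ring,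
        Real.mul_self_sqrt (hG00 i j), abs_mul, abs_of_nonneg (hG00 i j)]
    rw [← tsum_congr hcongr]
    refine le_trans hb ?_
    have h1 : ∑' i, Real.sqrt (G0 i j) ^ 2 = ∑' i, G0 i j :=
      tsum_congr fun i => Real.sq_sqrt (hG00 i j)
    have h2 : ∑' i, (δ i * Real.sqrt (G0 i j)) ^ 2 = s j :=
      tsum_congr fun i => by rw [mul_pow, Real.sq_sqrt (hG00 i j)]
    rw [h1, h2]
    apply mul_le_mul_of_nonneg_right _ (Real.sqrt_nonneg _)
    exact Real.sqrt_le_sqrt (hG0colle j)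
  set ψ : ℕ × ℕ → ℝ := fun r => |x r.1| * (|δ r.2| * G0 r.2 r.1) with hψ
  have hψ0 : (0:ℕ × ℕ → ℝ) ≤ ψ := fun r =>
    mul_nonneg (abs_nonneg _) (mul_nonneg (abs_nonneg _) (hG00 _ _))
  have hψrow : ∀ j, Summable (fun i => ψ (j, i)) := fun j => by
    simpa [hψ] using (hwcol j).mul_left (|x j|)
  have hψrowsum : ∀ j, ∑' i, ψ (j, i) = |x j| * ∑' i, |δ i| * G0 i j := fun j => by
    rw [← tsum_mul_left]
  have hxs : Summable (fun j => |x j| * Real.sqrt (s j)) := by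
    obtain ⟨hsum0, -⟩ := tsum_CS hxsq ((hssum).congr
      (fun j => (Real.sq_sqrt (hs0 j)).symm))
    apply hsum0.congr
    intro j
    rw [abs_mul, abs_of_nonneg (Real.sqrt_nonneg _)]
  have hψrowle : ∀ j, ∑' i, ψ (j, i)
      ≤ Real.sqrt cΓ * (|x j| * Real.sqrt (s j)) := fun j => by
    rw [hψrowsum j]
    calc |x j| * ∑' i, |δ i| * G0 i j
        ≤ |x j| * (Real.sqrt cΓ * Real.sqrt (s j)) :=
          mul_le_mul_of_nonneg_left (hwle j) (abs_nonneg _)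
      _ = Real.sqrt cΓ * (|x j| * Real.sqrt (s j)) := by ring
  have hψrows : Summable (fun j => ∑' i, ψ (j, i)) :=
    Summable.of_nonneg_of_le (fun j => tsum_nonneg fun i => hψ0 (j, i)) hψrowle
      (hxs.mul_left (Real.sqrt cΓ))
  have hψsum : Summable ψ := (summable_prod_of_nonneg hψ0).mpr ⟨hψrow, hψrows⟩
  have hF4sum : Summable F4 := by
    have h := (Equiv.prodComm ℕ ℕ).summable_iff.mpr hψsum
    exact h.congr fun p => rfl
  have hψxsq : ∑' j, Real.sqrt (s j) ^ 2 = ∑' j, s j :=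
    tsum_congr fun j => Real.sq_sqrt (hs0 j)
  have hF4bound : ∑' p, F4 p ≤ Real.sqrt cΓ * Real.sqrt K * N * Δ := by
    have he : ∑' p, F4 p = ∑' r, ψ r := by
      rw [← (Equiv.prodComm ℕ ℕ).tsum_eq ψ]
      exact tsum_congr fun p => rfl
    rw [he, Summable.tsum_prod' hψsum hψrow]
    calc ∑' j, ∑' i, ψ (j, i)
        ≤ ∑' j, Real.sqrt cΓ * (|x j| * Real.sqrt (s j)) :=
          Summable.tsum_le_tsum hψrowle hψrows (hxs.mul_left (Real.sqrt cΓ))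
      _ = Real.sqrt cΓ * ∑' j, |x j| * Real.sqrt (s j) := tsum_mul_left
      _ ≤ Real.sqrt cΓ * (N * (Real.sqrt K * Δ)) := by
          apply mul_le_mul_of_nonneg_left _ (Real.sqrt_nonneg _)
          obtain ⟨-, hb⟩ := tsum_CS hxsq ((hssum).congr
            (fun j => (Real.sq_sqrt (hs0 j)).symm))
          have hcongr : ∀ j, |x j * Real.sqrt (s j)| = |x j| * Real.sqrt (s j) :=
            fun j => by rw [abs_mul, abs_of_nonneg (Real.sqrt_nonneg _)]
          rw [← tsum_congr hcongr]
          refine le_trans hb ?_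
          rw [hxsqt, Real.sqrt_sq hN0, hψxsq]
          apply mul_le_mul_of_nonneg_left _ hN0
          calc Real.sqrt (∑' j, s j) ≤ Real.sqrt (K * Δ ^ 2) :=
                Real.sqrt_le_sqrt hstot
            _ = Real.sqrt K * Δ := by
                rw [Real.sqrt_mul hK0, Real.sqrt_sq hΔ0]
      _ = Real.sqrt cΓ * Real.sqrt K * N * Δ := by ring
  -- assembly
  have hdecomp : ∀ p : ℕ × ℕ, (|x p.1| + |x p.2|) * mrFn K Γ q q' p
      = F1 p + F2 p + F3 p + F4 p := by
    intro p
    simp only [mrFn, hF1, hF2, hF3, hF4, hd, hG0, hδ]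
    by_cases h : p.1 = p.2
    · simp [h]
    · rw [if_neg h, if_neg (fun hh => h hh.symm), if_neg (fun hh => h hh.symm)]
      ring
  have htotsum : Summable (fun p : ℕ × ℕ => (|x p.1| + |x p.2|) * mrFn K Γ q q' p) :=
    (((hF1sum.add hF2sum).add hF3sum).add hF4sum).congr fun p => (hdecomp p).symm
  refine ⟨htotsum, ?_⟩
  calc ∑' p : ℕ × ℕ, (|x p.1| + |x p.2|) * mrFn K Γ q q' p
      = ∑' p, (F1 p + F2 p + F3 p + F4 p) := tsum_congr hdecomp
    _ = ∑' p, F1 p + ∑' p, F2 p + ∑' p, F3 p + ∑' p, F4 p := by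
        rw [Summable.tsum_add ((hF1sum.add hF2sum).add hF3sum) hF4sum,
          Summable.tsum_add (hF1sum.add hF2sum) hF3sum, Summable.tsum_add hF1sum hF2sum]
    _ ≤ LΓ * Δ * N + LΓ * Δ * N + K * N * Δ + Real.sqrt cΓ * Real.sqrt K * N * Δ := by
        linarith [hF1bound, hF2bound, hF3bound, hF4bound]
    _ = (2 * LΓ + K + Real.sqrt cΓ * Real.sqrt K) * N * Δ := by ring

lemma mrFn_nonneg {K : ℝ} {Γ : H2 → ℕ → ℕ → ℝ} (hΓ : RateMatrix K Γ)
    {q q' : H2} (hq : q ∈ simplexS) (hq' : q' ∈ simplexS) (p : ℕ × ℕ) :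
    0 ≤ mrFn K Γ q q' p := by
  rw [mrFn]
  split
  · rfl
  · rename_i h
    exact add_nonneg (mul_nonneg (hq'.1 _) (abs_nonneg _))
      (mul_nonneg (abs_nonneg _) (hΓ.nonneg q hq _ _ h))

lemma inner_int_bound {K : ℝ} (hK0 : 0 ≤ K) {Γ : H2 → ℕ → ℕ → ℝ} (hΓ : RateMatrix K Γ)
    {q q' : H2} (hq : q ∈ simplexS) (hq' : q' ∈ simplexS)
    {g : ℝ × ℝ → ℝ} (hg : Measurable g) {C : ℝ} (hC : ∀ y, |g y| ≤ C) (x : H2)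
    (hsum : Summable (fun p : ℕ × ℕ => (|x p.1| + |x p.2|) * mrFn K Γ q q' p)) :
    |∫ y : ℝ × ℝ, (inner ℝ x (g y • (Gmap K Γ q' y - Gmap K Γ q y)) : ℝ)|
      ≤ C * ∑' p : ℕ × ℕ, (|x p.1| + |x p.2|) * mrFn K Γ q q' p := by
  classical
  have hC0 : 0 ≤ C := le_trans (abs_nonneg _) (hC (0, 0))
  set f : ℝ × ℝ → H2 := fun y => g y • (Gmap K Γ q' y - Gmap K Γ q y) with hf_def
  have hf : Integrable f volume := integrable_main hΓ hq hq' hg hC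
  set φ : ℝ × ℝ → ℝ := fun y => (inner ℝ x (f y) : ℝ) with hφ_def
  have hφint : Integrable φ volume := hf.const_inner x
  have hval : ∀ i j : ℕ, (inner ℝ x (lp.single 2 j (1:ℝ) - lp.single 2 i 1) : ℝ)
      = x j - x i := by
    intro i j
    rw [inner_sub_right, lp.inner_single_right, lp.inner_single_right]
    simp [RCLike.inner_apply]
  set Ψ : ℝ × ℝ → ENNReal := fun y => ∑' p : ℕ × ℕ,
    (Dset K Γ q q' p).indicator
      (fun _ => ENNReal.ofReal (C * (|x p.1| + |x p.2|))) y with hΨ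
  have hpoint : ∀ y, ENNReal.ofReal |φ y| ≤ Ψ y := by
    intro y
    by_cases hP' : ∃ p : ℕ × ℕ, p.1 ≠ p.2 ∧ y ∈ Aset K Γ q' p.1 p.2
    · obtain ⟨⟨i, j⟩, hij, hy'⟩ := hP'
      by_cases hP : ∃ p : ℕ × ℕ, p.1 ≠ p.2 ∧ y ∈ Aset K Γ q p.1 p.2
      · obtain ⟨⟨k, l⟩, hkl, hy⟩ := hP
        obtain ⟨h1, h2⟩ := Aset_unique hK0 hΓ hq' hq hy' hy
        have hzero : φ y = 0 := by
          simp only [hφ_def, hf_def]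
          rw [Gmap_eq_of_mem hK0 hΓ hq' hy', Gmap_eq_of_mem hK0 hΓ hq hy,
            h1, h2, sub_self, smul_zero, inner_zero_right]
        rw [hzero]
        simp
      · have hGq : Gmap K Γ q y = 0 := Gmap_eq_zero hP
        have hGq' : Gmap K Γ q' y = lp.single 2 j 1 - lp.single 2 i 1 :=
          Gmap_eq_of_mem hK0 hΓ hq' hy'
        have hφval : φ y = g y * (x j - x i) := by
          simp only [hφ_def, hf_def]
          rw [hGq, hGq', sub_zero, real_inner_smul_right, hval]
        have hmem : y ∈ Dset K Γ q q' (i, j) :=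
          Set.mem_union_left _ ⟨hy', fun hmemq => hP ⟨(i, j), hij, hmemq⟩⟩
        calc ENNReal.ofReal |φ y|
            ≤ ENNReal.ofReal (C * (|x i| + |x j|)) := by
              apply ENNReal.ofReal_le_ofReal
              rw [hφval, abs_mul]
              apply mul_le_mul (hC y) _ (abs_nonneg _) hC0
              calc |x j - x i| ≤ |x j| + |x i| := abs_sub _ _
                _ = |x i| + |x j| := by ring
          _ = (Dset K Γ q q' (i, j)).indicator
              (fun _ => ENNReal.ofReal (C * (|x (i, j).1| + |x (i, j).2|))) y := by
              rw [Set.indicator_of_mem hmem]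
          _ ≤ Ψ y := ENNReal.le_tsum (i, j)
    · by_cases hP : ∃ p : ℕ × ℕ, p.1 ≠ p.2 ∧ y ∈ Aset K Γ q p.1 p.2
      · obtain ⟨⟨i, j⟩, hij, hy⟩ := hP
        have hGq' : Gmap K Γ q' y = 0 := Gmap_eq_zero hP'
        have hGq : Gmap K Γ q y = lp.single 2 j 1 - lp.single 2 i 1 :=
          Gmap_eq_of_mem hK0 hΓ hq hy
        have hφval : φ y = g y * -(x j - x i) := by
          simp only [hφ_def, hf_def]
          rw [hGq, hGq', zero_sub, real_inner_smul_right, inner_neg_right, hval]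
        have hmem : y ∈ Dset K Γ q q' (i, j) :=
          Set.mem_union_right _ ⟨hy, fun hmemq' => hP' ⟨(i, j), hij, hmemq'⟩⟩
        calc ENNReal.ofReal |φ y|
            ≤ ENNReal.ofReal (C * (|x i| + |x j|)) := by
              apply ENNReal.ofReal_le_ofReal
              rw [hφval, abs_mul, abs_neg]
              apply mul_le_mul (hC y) _ (abs_nonneg _) hC0
              calc |x j - x i| ≤ |x j| + |x i| := abs_sub _ _
                _ = |x i| + |x j| := by ring
          _ = (Dset K Γ q q' (i, j)).indicator
              (fun _ => ENNReal.ofReal (C * (|x (i, j).1| + |x (i, j).2|))) y := by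
              rw [Set.indicator_of_mem hmem]
          _ ≤ Ψ y := ENNReal.le_tsum (i, j)
      · have hzero : φ y = 0 := by
          simp only [hφ_def, hf_def]
          rw [Gmap_eq_zero hP, Gmap_eq_zero hP', sub_self, smul_zero, inner_zero_right]
        rw [hzero]
        simp
  -- the lintegral computation
  have hvolD : ∀ p : ℕ × ℕ, volume (Dset K Γ q q' p) ≤ ENNReal.ofReal (mrFn K Γ q q' p) := by
    rintro ⟨i, j⟩
    by_cases h : i = j
    · subst h
      have : Dset K Γ q q' (i, i) = ∅ := by
        rw [Dset]
        simp [Aset_diag_empty hΓ hq, Aset_diag_empty hΓ hq']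
      rw [this]
      simp
    · refine le_trans (vol_Dset_le hΓ hq hq' h) (le_of_eq ?_)
      rw [mrFn, if_neg h]
  have hΨint : ∫⁻ y, Ψ y ≤ ENNReal.ofReal
      (∑' p : ℕ × ℕ, C * ((|x p.1| + |x p.2|) * mrFn K Γ q q' p)) := by
    rw [hΨ, lintegral_tsum (fun p =>
      (measurable_const.indicator (measurableSet_Dset K Γ q q' p)).aemeasurable)]
    have hterm : ∀ p : ℕ × ℕ,
        ∫⁻ y, (Dset K Γ q q' p).indicator
          (fun _ => ENNReal.ofReal (C * (|x p.1| + |x p.2|))) y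
        ≤ ENNReal.ofReal (C * ((|x p.1| + |x p.2|) * mrFn K Γ q q' p)) := by
      intro p
      rw [lintegral_indicator_const (measurableSet_Dset K Γ q q' p)]
      calc ENNReal.ofReal (C * (|x p.1| + |x p.2|)) * volume (Dset K Γ q q' p)
          ≤ ENNReal.ofReal (C * (|x p.1| + |x p.2|))
            * ENNReal.ofReal (mrFn K Γ q q' p) := by
            exact mul_le_mul_right (hvolD p) _
        _ = ENNReal.ofReal (C * ((|x p.1| + |x p.2|) * mrFn K Γ q q' p)) := by
            rw [← ENNReal.ofReal_mul
              (mul_nonneg hC0 (add_nonneg (abs_nonneg _) (abs_nonneg _)))]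
            congr 1
            ring
    refine le_trans (ENNReal.tsum_le_tsum hterm) (le_of_eq ?_)
    rw [ENNReal.ofReal_tsum_of_nonneg
      (fun p => mul_nonneg hC0 (mul_nonneg
        (add_nonneg (abs_nonneg _) (abs_nonneg _)) (mrFn_nonneg hΓ hq hq' p)))
      (hsum.mul_left C)]
  -- put it together
  have habs : |∫ y, φ y| ≤ ∫ y, |φ y| := by
    simpa [Real.norm_eq_abs] using norm_integral_le_integral_norm (μ := volume) φ
  have heq : ∫ y, |φ y| = (∫⁻ y, ENNReal.ofReal |φ y|).toReal :=
    integral_eq_lintegral_of_nonneg_ae (Filter.Eventually.of_forall fun y => abs_nonneg _)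
      hφint.abs.1
  have hfin : ∫ y, |φ y| ≤ C * ∑' p : ℕ × ℕ, (|x p.1| + |x p.2|) * mrFn K Γ q q' p := by
    rw [heq]
    have h1 : (∫⁻ y, ENNReal.ofReal |φ y|) ≤ ENNReal.ofReal
        (∑' p : ℕ × ℕ, C * ((|x p.1| + |x p.2|) * mrFn K Γ q q' p)) :=
      le_trans (lintegral_mono hpoint) hΨint
    calc (∫⁻ y, ENNReal.ofReal |φ y|).toReal
        ≤ (ENNReal.ofReal
          (∑' p : ℕ × ℕ, C * ((|x p.1| + |x p.2|) * mrFn K Γ q q' p))).toReal :=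
          ENNReal.toReal_mono ENNReal.ofReal_ne_top h1
      _ = ∑' p : ℕ × ℕ, C * ((|x p.1| + |x p.2|) * mrFn K Γ q q' p) := by
          rw [ENNReal.toReal_ofReal]
          apply tsum_nonneg
          intro p
          exact mul_nonneg hC0 (mul_nonneg
            (add_nonneg (abs_nonneg _) (abs_nonneg _)) (mrFn_nonneg hΓ hq hq' p))
      _ = C * ∑' p : ℕ × ℕ, (|x p.1| + |x p.2|) * mrFn K Γ q q' p := tsum_mul_left
  exact le_trans habs hfin


/-- Under the extra assumptions (i) `sup_{q∈Ŝ} sup_j ∑_i |Γ_ij(q)| ≤ c_Γ` and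
(ii) `sup_i ∑_{j≠i} |Γ_ij(q̃) − Γ_ij(q)| ≤ L_Γ ‖q̃ − q‖`, there is `γ₅ ∈ (0,∞)`
such that for every bounded measurable `g : X → ℝ` with `|g| ≤ C` and all
`q, q̃ ∈ Ŝ`, the Bochner integral `∫_X (G(q̃,y) − G(q,y)) g(y) dy` exists in
`ℓ²(ℕ)` and has norm at most `γ₅ C ‖q̃ − q‖`. -/
theorem stmt9 (K : ℝ) (hK0 : 0 ≤ K) (Γ : H2 → ℕ → ℕ → ℝ) (hΓ : RateMatrix K Γ)
    (cΓ LΓ : ℝ) (hcΓ0 : 0 < cΓ) (hLΓ0 : 0 < LΓ)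
    (hcΓ : ∀ q ∈ simplexS, ∀ j, Summable (fun i => |Γ q i j|) ∧
      (∑' i, |Γ q i j|) ≤ cΓ)
    (hLΓ : ∀ q ∈ simplexS, ∀ q' ∈ simplexS, ∀ i,
      Summable (fun j => if j = i then 0 else |Γ q' i j - Γ q i j|) ∧
      (∑' j, if j = i then 0 else |Γ q' i j - Γ q i j|) ≤ LΓ * ‖q' - q‖) :
    ∃ γ₅ : ℝ, 0 < γ₅ ∧
      ∀ g : ℝ × ℝ → ℝ, Measurable g → ∀ C : ℝ, (∀ y, |g y| ≤ C) →
      ∀ q ∈ simplexS, ∀ q' ∈ simplexS,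
        Integrable (fun y : ℝ × ℝ => g y • (Gmap K Γ q' y - Gmap K Γ q y)) volume ∧
        ‖∫ y : ℝ × ℝ, g y • (Gmap K Γ q' y - Gmap K Γ q y)‖ ≤ γ₅ * C * ‖q' - q‖ := by
  set B : ℝ := 2 * LΓ + K + Real.sqrt cΓ * Real.sqrt K with hB
  have hB0 : 0 < B := by
    have h1 : 0 ≤ Real.sqrt cΓ * Real.sqrt K :=
      mul_nonneg (Real.sqrt_nonneg _) (Real.sqrt_nonneg _)
    rw [hB]; linarith
  refine ⟨B, hB0, ?_⟩
  intro g hg C hC q hq q' hq'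
  have hC0 : 0 ≤ C := le_trans (abs_nonneg _) (hC (0, 0))
  have hf : Integrable (fun y : ℝ × ℝ => g y • (Gmap K Γ q' y - Gmap K Γ q y)) volume :=
    integrable_main hΓ hq hq' hg hC
  refine ⟨hf, ?_⟩
  set x : H2 := ∫ y : ℝ × ℝ, g y • (Gmap K Γ q' y - Gmap K Γ q y) with hx
  obtain ⟨hsum, hest⟩ := scalar_est hK0 hΓ hcΓ0 hLΓ0 hcΓ hLΓ hq hq' x
  have hinner : ‖x‖ ^ 2
      = ∫ y : ℝ × ℝ, (inner ℝ x (g y • (Gmap K Γ q' y - Gmap K Γ q y)) : ℝ) := by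
    rw [integral_inner hf x, ← hx, real_inner_self_eq_norm_sq]
  have hkey : ‖x‖ ^ 2 ≤ C * (B * ‖x‖ * ‖q' - q‖) := by
    calc ‖x‖ ^ 2
        = ∫ y : ℝ × ℝ, (inner ℝ x (g y • (Gmap K Γ q' y - Gmap K Γ q y)) : ℝ) := hinner
      _ ≤ |∫ y : ℝ × ℝ, (inner ℝ x (g y • (Gmap K Γ q' y - Gmap K Γ q y)) : ℝ)| :=
          le_abs_self _
      _ ≤ C * ∑' p : ℕ × ℕ, (|x p.1| + |x p.2|) * mrFn K Γ q q' p :=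
          inner_int_bound hK0 hΓ hq hq' hg hC x hsum
      _ ≤ C * (B * ‖x‖ * ‖q' - q‖) := mul_le_mul_of_nonneg_left hest hC0
  rcases eq_or_lt_of_le (norm_nonneg x) with h0 | h0
  · rw [← h0]
    exact mul_nonneg (mul_nonneg hB0.le hC0) (norm_nonneg _)
  · nlinarith [hkey, norm_nonneg (q' - q)]


end
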